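/- arXiv:2308.15408 — 2 statements merged into one kernel-verified Lean document; each statement's English description precedes it below -/
import Mathlib

section
/- Let A, λ ∈ ℝ and let h : ℝ → ℂ be C³. Define u(t,y) = e^{iλ(y + Aλ²t)}·h(y + 3Aλ²t). Then for all (t,y): A^{−1}·∂_t u + ∂_y³ u = e^{iλ(y + Aλ²t)}·( 3iλ·h'' + h''' )(y + 3Aλ²t) (for A ≠ 0; equivalently ∂_t u + A·∂_y³ u = A·e^{iλ(y+Aλ²t)}(3iλ h'' + h''')(y + 3Aλ²t) for all A). -/
open Complex

lemma airy_step (c b : ℂ) (a : ℝ) (g : ℝ → ℂ) (hg : Differentiable ℝ g) (y : ℝ) :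
    deriv (fun y' : ℝ => Complex.exp (c * (↑y' + b)) * g (y' + a)) y
      = Complex.exp (c * (↑y + b)) * (c * g (y + a) + deriv g (y + a)) := by
  have h1 : HasDerivAt (fun y' : ℝ => (↑y' : ℂ)) 1 y := by
    simpa using (hasDerivAt_id y).ofReal_comp
  have hE : HasDerivAt (fun y' : ℝ => Complex.exp (c * (↑y' + b)))
      (Complex.exp (c * (↑y + b)) * c) y := by
    simpa using ((h1.add_const b).const_mul c).cexp
  have hG : HasDerivAt (fun y' : ℝ => g (y' + a)) (deriv g (y + a)) y :=
    HasDerivAt.comp_add_const y a (hg (y + a)).hasDerivAt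
  have := (hE.mul hG).deriv
  exact this.trans (by ring)

/-- Exact error identity for the Airy wave packet
u(t,y) = e^{iλ(y + Aλ²t)} h(y + 3Aλ²t):
∂_t u + A ∂_y³ u = A e^{iλ(y+Aλ²t)} (3iλ h'' + h''')(y + 3Aλ²t). -/
theorem airy_wave_packet_error (A lam : ℝ) (h : ℝ → ℂ) (hh : ContDiff ℝ 3 h)
    (u : ℝ → ℝ → ℂ)
    (hu : ∀ t y, u t y =
      Complex.exp (Complex.I * lam * (y + A * lam ^ 2 * t)) *
        h (y + 3 * A * lam ^ 2 * t)) :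
    ∀ t y : ℝ,
      deriv (fun t' => u t' y) t +
        (A : ℂ) * deriv (fun y₁ => deriv (fun y₂ => deriv (fun y₃ => u t y₃) y₂) y₁) y =
      (A : ℂ) * Complex.exp (Complex.I * lam * (y + A * lam ^ 2 * t)) *
        (3 * Complex.I * lam * iteratedDeriv 2 h (y + 3 * A * lam ^ 2 * t) +
          iteratedDeriv 3 h (y + 3 * A * lam ^ 2 * t)) := by
  intro t y
  set c : ℂ := Complex.I * lam with hc
  -- regularity facts
  have hh2 : ContDiff ℝ 2 (deriv h) := by
    have h3 : ContDiff ℝ ((2 : WithTop ℕ∞) + 1) h := by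
      rw [show ((2 : WithTop ℕ∞) + 1) = 3 by norm_num]; exact hh
    exact (contDiff_succ_iff_deriv.mp h3).2.2
  have hh1 : ContDiff ℝ 1 (deriv (deriv h)) := by
    have h3 : ContDiff ℝ ((1 : WithTop ℕ∞) + 1) (deriv h) := by
      rw [show ((1 : WithTop ℕ∞) + 1) = 2 by norm_num]; exact hh2
    exact (contDiff_succ_iff_deriv.mp h3).2.2
  have hd0 : Differentiable ℝ h := hh.differentiable (by norm_num)
  have hd1 : Differentiable ℝ (deriv h) := hh2.differentiable (by norm_num)
  have hd2 : Differentiable ℝ (deriv (deriv h)) := hh1.differentiable (by norm_num)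
  set h1 := deriv h
  set h2 := deriv h1
  set h3 := deriv h2
  set g1 : ℝ → ℂ := fun s => c * h s + h1 s with hg1
  set g2 : ℝ → ℂ := fun s => c * g1 s + (c * h1 s + h2 s) with hg2
  have hdg1 : Differentiable ℝ g1 := (hd0.const_mul c).add hd1
  have hdg2 : Differentiable ℝ g2 :=
    (hdg1.const_mul c).add ((hd1.const_mul c).add hd2)
  have dg1 : ∀ s, deriv g1 s = c * h1 s + h2 s := fun s =>
    (((hd0 s).hasDerivAt.const_mul c).add (hd1 s).hasDerivAt).deriv
  have dg2 : ∀ s, deriv g2 s = c * (c * h1 s + h2 s) + (c * h2 s + h3 s) := by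
    intro s
    have H := (((hdg1 s).hasDerivAt.const_mul c).add
      (((hd1 s).hasDerivAt.const_mul c).add (hd2 s).hasDerivAt)).deriv
    rw [dg1 s] at H
    exact H
  set b : ℂ := (A : ℂ) * (lam : ℂ) ^ 2 * (t : ℂ) with hb
  set a : ℝ := 3 * A * lam ^ 2 * t with ha
  have hfun : (fun y₃ => u t y₃) =
      fun y₃ : ℝ => Complex.exp (c * (↑y₃ + b)) * h (y₃ + a) := by
    funext z
    rw [hu t z]
  -- first y-derivative
  have D1 : (fun y₂ => deriv (fun y₃ => u t y₃) y₂) =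
      fun y₂ : ℝ => Complex.exp (c * (↑y₂ + b)) * g1 (y₂ + a) := by
    funext z
    rw [hfun, airy_step c b a h hd0 z]
  -- second
  have D2 : (fun y₁ => deriv (fun y₂ => deriv (fun y₃ => u t y₃) y₂) y₁) =
      fun y₁ : ℝ => Complex.exp (c * (↑y₁ + b)) * g2 (y₁ + a) := by
    funext z
    rw [D1, airy_step c b a g1 hdg1 z]
    simp only [hg2, dg1]
  -- third
  have D3 : deriv (fun y₁ => deriv (fun y₂ => deriv (fun y₃ => u t y₃) y₂) y₁) y =
      Complex.exp (c * (↑y + b)) * (c * g2 (y + a) + deriv g2 (y + a)) := by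
    rw [D2, airy_step c b a g2 hdg2 y]
  -- time derivative
  have hR : HasDerivAt (fun t' : ℝ => (↑t' : ℂ)) 1 t := by
    simpa using (hasDerivAt_id t).ofReal_comp
  have hEt : HasDerivAt (fun t' : ℝ => Complex.exp (c * (↑y + (A : ℂ) * (lam:ℂ) ^ 2 * ↑t')))
      (Complex.exp (c * (↑y + b)) * (c * ((A : ℂ) * (lam:ℂ) ^ 2))) t := by
    have := ((((hR.const_mul ((A : ℂ) * (lam:ℂ) ^ 2)).const_add (y : ℂ)).const_mul c).cexp)
    simpa [hb, mul_comm, mul_assoc, mul_left_comm] using this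
  have hHt : HasDerivAt (fun t' : ℝ => h (y + 3 * A * lam ^ 2 * t'))
      (h1 (y + a) * (3 * A * lam ^ 2)) t := by
    have hin : HasDerivAt (fun t' : ℝ => y + 3 * A * lam ^ 2 * t') (3 * A * lam ^ 2) t := by
      simpa using ((hasDerivAt_id t).const_mul (3 * A * lam ^ 2)).const_add y
    have := HasDerivAt.scomp (𝕜 := ℝ) t
      (show HasDerivAt h (h1 (y + a)) (y + 3 * A * lam ^ 2 * t) from (hd0 (y + a)).hasDerivAt) hin
    simpa [Function.comp_def, smul_eq_mul, mul_comm] using this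
  have Dt : deriv (fun t' => u t' y) t =
      Complex.exp (c * (↑y + b)) * (c * ((A : ℂ) * (lam:ℂ) ^ 2)) * h (y + a) +
        Complex.exp (c * (↑y + b)) * (h1 (y + a) * (3 * A * lam ^ 2)) := by
    have hfunT : (fun t' => u t' y) =
        fun t' : ℝ => Complex.exp (c * (↑y + (A : ℂ) * (lam:ℂ) ^ 2 * ↑t')) *
          h (y + 3 * A * lam ^ 2 * t') := by
      funext z
      rw [hu z y]
    rw [hfunT]
    have := (hEt.mul hHt).deriv
    exact this
  -- put it together
  have hexp : Complex.exp (Complex.I * lam * (y + A * lam ^ 2 * t)) =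
      Complex.exp (c * (↑y + b)) := by rw [hc, hb]
  have hit2 : iteratedDeriv 2 h (y + 3 * A * lam ^ 2 * t) = h2 (y + a) := by
    simp [iteratedDeriv_succ, iteratedDeriv_zero, ha, h1, h2]
  have hit3 : iteratedDeriv 3 h (y + 3 * A * lam ^ 2 * t) = h3 (y + a) := by
    simp [iteratedDeriv_succ, iteratedDeriv_zero, ha, h1, h2, h3]
  rw [Dt, D3, hexp, hit2, hit3, dg2]
  simp only [hg2, hg1, hc]
  have hI : (Complex.I : ℂ) * Complex.I = -1 := Complex.I_mul_I

  linear_combination ((A : ℂ) * Complex.exp (c * (↑y + b)) * (lam:ℂ)^2 *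
    (Complex.I * (lam:ℂ) * h (y + a) + 3 * h1 (y + a))) * hI
end

section
/- Let λ < 0, t ≥ 0, and let a₀ : ℝ → ℂ be continuous with support contained in (−2, −1). Define ψ(t,x) = x^{−1}·e^{iλ(log x − λt)}·a₀(log x − 2λt) for x > 0. Then (∫₀^∞ |x·ψ(t,x)|² dx)^{1/2} ≤ e^{−|λ|t}·(∫_ℝ |a₀(z)|² dz)^{1/2}. -/
open MeasureTheory Real Set

/-- Degeneration estimate: with weight |x|, the model wave packet for the
linearized Hunter–Smothers equation decays exponentially at rate |λ|. -/
theorem degenerating_wave_packet_decay (lam t : ℝ) (hlam : lam < 0) (ht : 0 ≤ t)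
    (a₀ : ℝ → ℂ) (ha : Continuous a₀)
    (hs : Function.support a₀ ⊆ Set.Ioo (-2 : ℝ) (-1))
    (ψ : ℝ → ℝ → ℂ)
    (hψ : ∀ t' x : ℝ, ψ t' x = ((x : ℂ))⁻¹ *
      Complex.exp (Complex.I * lam * (Real.log x - lam * t')) *
        a₀ (Real.log x - 2 * lam * t')) :
    Real.sqrt (∫ x in Set.Ioi (0:ℝ), ‖(x : ℂ) * ψ t x‖ ^ 2) ≤
      Real.exp (-|lam| * t) * Real.sqrt (∫ z : ℝ, ‖a₀ z‖ ^ 2) := by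
  set c : ℝ := 2 * lam * t with hc
  -- pointwise simplification on Ioi 0
  have hpt : ∀ x ∈ Ioi (0:ℝ), ‖(x : ℂ) * ψ t x‖ ^ 2 = ‖a₀ (Real.log x - c)‖ ^ 2 := by
    intro x hx
    have hx0 : (x : ℂ) ≠ 0 := by exact_mod_cast (ne_of_gt hx)
    rw [hψ]
    have h1 : (x : ℂ) * ((x : ℂ)⁻¹ *
        Complex.exp (Complex.I * lam * (Real.log x - lam * t)) *
        a₀ (Real.log x - 2 * lam * t)) =
        Complex.exp (Complex.I * lam * (Real.log x - lam * t)) *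
        a₀ (Real.log x - 2 * lam * t) := by
      field_simp
    rw [h1]
    rw [norm_mul]
    have h2 : ‖Complex.exp (Complex.I * lam * (Real.log x - lam * t))‖ = 1 := by
      rw [Complex.norm_exp]
      have : (Complex.I * lam * (Real.log x - lam * t)).re = 0 := by
        simp [Complex.mul_re, Complex.mul_im]
      rw [this, Real.exp_zero]
    rw [h2, one_mul]
  have h1 : (∫ x in Ioi (0:ℝ), ‖(x : ℂ) * ψ t x‖ ^ 2) =
      ∫ x in Ioi (0:ℝ), ‖a₀ (Real.log x - c)‖ ^ 2 :=
    setIntegral_congr_fun measurableSet_Ioi hpt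
  -- change of variables x = exp y
  have himg : Real.exp '' univ = Ioi (0:ℝ) := by
    rw [image_univ, Real.range_exp]
  have h2 : (∫ x in Ioi (0:ℝ), ‖a₀ (Real.log x - c)‖ ^ 2) =
      ∫ y : ℝ, |Real.exp y| • ‖a₀ (Real.log (Real.exp y) - c)‖ ^ 2 := by
    rw [← himg, integral_image_eq_integral_abs_deriv_smul MeasurableSet.univ
      (fun x _ => (Real.hasDerivAt_exp x).hasDerivWithinAt)
      (Real.exp_injective.injOn), setIntegral_univ]
  have h3 : (∫ y : ℝ, |Real.exp y| • ‖a₀ (Real.log (Real.exp y) - c)‖ ^ 2) =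
      ∫ y : ℝ, Real.exp y * ‖a₀ (y - c)‖ ^ 2 := by
    congr 1; ext y
    rw [Real.log_exp, abs_of_pos (Real.exp_pos y), smul_eq_mul]
  have h4 : (∫ y : ℝ, Real.exp y * ‖a₀ (y - c)‖ ^ 2) =
      ∫ z : ℝ, Real.exp (z + c) * ‖a₀ z‖ ^ 2 := by
    rw [← integral_sub_right_eq_self (fun z => Real.exp (z + c) * ‖a₀ z‖ ^ 2) c]
    congr 1; ext y; rw [sub_add_cancel]
  -- integrability of the dominator
  have hcs : HasCompactSupport (fun z => ‖a₀ z‖ ^ 2) := by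
    apply HasCompactSupport.intro (isCompact_Icc (a := (-2:ℝ)) (b := -1))
    intro z hz
    have : a₀ z = 0 := by
      by_contra h
      exact hz (Ioo_subset_Icc_self (hs h))
    simp [this]
  have hint : Integrable (fun z => ‖a₀ z‖ ^ 2) :=
    (ha.norm.pow 2).integrable_of_hasCompactSupport hcs
  have h5 : (∫ z : ℝ, Real.exp (z + c) * ‖a₀ z‖ ^ 2) ≤
      ∫ z : ℝ, Real.exp c * ‖a₀ z‖ ^ 2 := by
    apply integral_mono_of_nonneg
    · filter_upwards with z
      positivity
    · exact hint.const_mul _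
    · filter_upwards with z
      by_cases h : a₀ z = 0
      · simp [h]
      · have hz := hs h
        have : Real.exp (z + c) ≤ Real.exp c := by
          rw [Real.exp_le_exp]
          nlinarith [hz.2, Real.exp_pos z]
        exact mul_le_mul_of_nonneg_right this (by positivity)
  have h6 : (∫ z : ℝ, Real.exp c * ‖a₀ z‖ ^ 2) = Real.exp c * ∫ z : ℝ, ‖a₀ z‖ ^ 2 :=
    integral_const_mul _ _
  have habs : Real.exp (-|lam| * t) = Real.exp (lam * t) := by
    rw [abs_of_neg hlam]; ring_nf
  calc Real.sqrt (∫ x in Ioi (0:ℝ), ‖(x : ℂ) * ψ t x‖ ^ 2)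
      ≤ Real.sqrt (Real.exp c * ∫ z : ℝ, ‖a₀ z‖ ^ 2) := by
        apply Real.sqrt_le_sqrt
        rw [h1, h2, h3, h4, ← h6]; exact h5
    _ = Real.exp (lam * t) * Real.sqrt (∫ z : ℝ, ‖a₀ z‖ ^ 2) := by
        rw [Real.sqrt_mul (Real.exp_nonneg _)]
        congr 1
        rw [hc, show (2:ℝ) * lam * t = ((2:ℕ):ℝ) * (lam * t) by push_cast; ring,
          Real.exp_nat_mul]
        exact Real.sqrt_sq (Real.exp_nonneg _)
    _ = Real.exp (-|lam| * t) * Real.sqrt (∫ z : ℝ, ‖a₀ z‖ ^ 2) := by rw [habs]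
end
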